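/- In 1+1 Minkowski space with interval δs² = c²δt² - δx², let A = (0,0) and B = (δt, δx) with δt > 0 and c²δt² > δx² (time-like segment), and let δτ = (δs²/c²)/δt > 0 be the internal time of the segment [A,B]. Then for any sufficiently small t̃ with 0 < t̃ < δt, there exists a point H = (t̃, h) on the line of simultaneity t = t̃ such that the total internal time of the broken path [A,H] ∪ [H,B], namely ((c²t̃² - h²)/c²)/t̃ + ((c²(δt - t̃)² - (δx - h)²)/c²)/(δt - t̃), equals -δτ. -/

import Mathlib

/-- for a time-like segment from `A = (0,0)` to `B = (δt,δx)` in 1+1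
Minkowski space, for any sufficiently small `0 < t̃ < δt` there is a point
`H = (t̃, h)` on the line of simultaneity `t = t̃` such that the total internal
time of the broken path `[A,H] ∪ [H,B]` equals `-δτ`. -/
theorem broken_path_inverts_internal_time
    (c δt δx : ℝ) (hc : 0 < c) (hδt : 0 < δt) (htimelike : c^2 * δt^2 > δx^2)
    (δτ : ℝ) (hδτ : δτ = (c^2 * δt^2 - δx^2) / c^2 / δt) :
    ∃ ε > 0, ∀ t' : ℝ, 0 < t' → t' < ε → t' < δt →
      ∃ h : ℝ,
        (c^2 * t'^2 - h^2) / c^2 / t' +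
          (c^2 * (δt - t')^2 - (δx - h)^2) / c^2 / (δt - t') = -δτ := by
  refine ⟨δt, hδt, ?_⟩
  intro t' ht0 _ htδ
  have hδt' : 0 < δt - t' := by linarith
  have hD : (0:ℝ) ≤ t' * (δt - t') * (2 * (c^2 * δt^2 - δx^2)) := by
    have : (0:ℝ) < c^2 * δt^2 - δx^2 := by linarith
    positivity
  set s := Real.sqrt (t' * (δt - t') * (2 * (c^2 * δt^2 - δx^2))) with hs
  have hs2 : s^2 = t' * (δt - t') * (2 * (c^2 * δt^2 - δx^2)) := Real.sq_sqrt hD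
  refine ⟨(t' * δx + s) / δt, ?_⟩
  subst hδτ
  have hc2 : (c:ℝ)^2 ≠ 0 := by positivity
  field_simp
  linear_combination (-δt) * hs2
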